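/- Let (X,d) be a metric space with a Borel regular doubling measure μ with constant C_d ≥ 1, let Ω ⊂ X be nonempty open with X∖Ω ≠ ∅, let λ ≥ 1, and let {B_j}_{j∈ℕ} with subordinate partition of unity {φ_j}_{j∈ℕ} be a Whitney covering of Ω with parameter λ and overlap constant C₀. Then for every u ∈ L¹(Ω), the discrete convolution u_W := Σ_j u_{B_j}·φ_j satisfies ‖u_W‖_{L¹(Ω)} ≤ C·‖u‖_{L¹(Ω)}, where C depends only on C_d and C₀. -/

import Mathlib

open Metric MeasureTheory

/-- A Whitney covering of an open set `Ω` with parameter `lam`, overlap constant `C₀`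
and partition-of-unity Lipschitz parameter `c`: balls `B_j = B(x_j, r_j)` with
`x_j ∈ Ω`, `r_j = dist(x_j, X∖Ω)/(100 lam)`, covering `Ω`, with bounded overlap of the
dilated balls `20 lam B_j` and comparable radii of intersecting dilated balls, together
with a subordinate partition of unity `φ_j`. -/
structure WhitneyCovering (X : Type*) [MetricSpace X] (Ω : Set X)
    (lam : ℝ) (C₀ : ℕ) (c : ℝ) where
  center : ℕ → X
  radius : ℕ → ℝ
  phi : ℕ → X → ℝ
  center_mem : ∀ j, center j ∈ Ω
  radius_eq : ∀ j, radius j = infDist (center j) Ωᶜ / (100 * lam)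
  covers : Ω = ⋃ j, ball (center j) (radius j)
  overlap : ∀ k, {j | (ball (center k) (20 * lam * radius k) ∩
      ball (center j) (20 * lam * radius j)).Nonempty}.encard ≤ (C₀ : ℕ∞)
  radius_le : ∀ k j, (ball (center k) (20 * lam * radius k) ∩
      ball (center j) (20 * lam * radius j)).Nonempty → radius j ≤ 2 * radius k
  phi_nonneg : ∀ j p, 0 ≤ phi j p
  phi_le_one : ∀ j p, phi j p ≤ 1
  phi_lip : ∀ j p q, |phi j p - phi j q| ≤ (c / radius j) * dist p q
  phi_supp : ∀ j, Function.support (phi j) ⊆ ball (center j) (2 * radius j)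
  phi_sum : ∀ p ∈ Ω, ∑' j, phi j p = 1

/-- The discrete convolution `u_W = Σ_j u_{B_j} φ_j` of `u` with respect to a Whitney
covering. -/
noncomputable def discreteConv {X : Type*} [MetricSpace X] [MeasurableSpace X]
    (μ : Measure X) {Ω : Set X} {lam : ℝ} {C₀ : ℕ} {c : ℝ}
    (W : WhitneyCovering X Ω lam C₀ c) (u : X → ℝ) : X → ℝ :=
  fun p => ∑' j, (⨍ y in ball (W.center j) (W.radius j), u y ∂μ) * W.phi j p

/-- For every `u ∈ L¹(Ω)`, the discrete convolution `u_W` with respect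
to a Whitney covering of `Ω` satisfies `‖u_W‖_{L¹(Ω)} ≤ C ‖u‖_{L¹(Ω)}`, where `C`
depends only on the doubling constant `C_d` and the overlap constant `C₀`. -/
theorem discreteConv_L1_bound (C_d : ℝ) (hCd : 1 ≤ C_d) (C₀ : ℕ) :
    ∃ C > (0 : ℝ), ∀ (X : Type) [MetricSpace X] [MeasurableSpace X] [BorelSpace X]
      (μ : Measure X),
      (∀ (x : X) (r : ℝ), 0 < r →
        0 < μ (ball x r) ∧ μ (ball x (2 * r)) ≤ ENNReal.ofReal C_d * μ (ball x r) ∧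
          μ (ball x r) < ⊤) →
      ∀ (Ω : Set X), IsOpen Ω → Ω.Nonempty → Ωᶜ.Nonempty →
      ∀ (lam c : ℝ), 1 ≤ lam → 0 < c →
      ∀ (W : WhitneyCovering X Ω lam C₀ c),
      ∀ u : X → ℝ, IntegrableOn u Ω μ →
        ∫⁻ p in Ω, ENNReal.ofReal |discreteConv μ W u p| ∂μ ≤
          ENNReal.ofReal C * ∫⁻ p in Ω, ENNReal.ofReal |u p| ∂μ := by

  refine ⟨C_d * C₀ + 1, by positivity, ?_⟩
  intro X _ _ _ μ hdoub Ω hΩopen hΩne hΩcne lam c hlam hc W u hu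
  have hΩm : MeasurableSet Ω := hΩopen.measurableSet
  have hlam0 : (0:ℝ) < lam := lt_of_lt_of_le one_pos hlam
  have hr : ∀ j, 0 < W.radius j := by
    intro j
    rw [W.radius_eq]
    apply div_pos
    · exact (hΩopen.isClosed_compl.notMem_iff_infDist_pos hΩcne).1
        (by simpa using W.center_mem j)
    · positivity
  have hBsub : ∀ j, ball (W.center j) (W.radius j) ⊆ Ω := by
    intro j
    refine Set.Subset.trans (ball_subset_ball ?_) ball_infDist_compl_subset
    rw [W.radius_eq]
    exact div_le_self infDist_nonneg (by nlinarith)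
  have hball1 : ∀ j, ball (W.center j) (W.radius j)
      ⊆ ball (W.center j) (20 * lam * W.radius j) := fun j =>
    ball_subset_ball (le_mul_of_one_le_left (hr j).le (by nlinarith))
  have hball2 : ∀ j, ball (W.center j) (2 * W.radius j)
      ⊆ ball (W.center j) (20 * lam * W.radius j) := fun j =>
    ball_subset_ball (by nlinarith [hr j])
  -- bounded overlap: each point of Ω lies in at most C₀ of the dilated balls
  have key : ∀ p ∈ Ω, ∃ s : Finset ℕ, s.card ≤ C₀ ∧
      ∀ j, p ∈ ball (W.center j) (20 * lam * W.radius j) → j ∈ s := by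
    intro p hp
    obtain ⟨k, hk⟩ : ∃ k, p ∈ ball (W.center k) (W.radius k) := by
      have h := hp; rw [W.covers] at h; simpa using h
    have hTle := W.overlap k
    have hTfin : {j | (ball (W.center k) (20 * lam * W.radius k) ∩
        ball (W.center j) (20 * lam * W.radius j)).Nonempty}.Finite :=
      Set.finite_of_encard_le_coe hTle
    refine ⟨hTfin.toFinset, ?_, ?_⟩
    · rw [hTfin.encard_eq_coe_toFinset_card] at hTle
      exact_mod_cast hTle
    · intro j hj
      exact hTfin.mem_toFinset.2 ⟨p, hball1 k hk, hj⟩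
  -- avg of |u|
  set b : ℕ → ℝ := fun j => ⨍ y in ball (W.center j) (W.radius j), |u y| ∂μ with hbdef
  have hbnn : ∀ j, 0 ≤ b j := by
    intro j
    rw [hbdef]
    simp only [setAverage_eq, smul_eq_mul]
    exact mul_nonneg (inv_nonneg.2 ENNReal.toReal_nonneg)
      (integral_nonneg fun y => abs_nonneg _)
  have hab : ∀ j, |⨍ y in ball (W.center j) (W.radius j), u y ∂μ| ≤ b j := by
    intro j
    rw [hbdef]
    simp only [setAverage_eq, smul_eq_mul, abs_mul,
      abs_of_nonneg (inv_nonneg.2 (measureReal_nonneg (μ := μ) (s := ball (W.center j) (W.radius j))))]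
    refine mul_le_mul_of_nonneg_left ?_ (inv_nonneg.2 measureReal_nonneg)
    simpa [Real.norm_eq_abs] using
      norm_integral_le_integral_norm (μ := μ.restrict (ball (W.center j) (W.radius j))) u
  set g : ℕ → X → ENNReal := fun j p => ENNReal.ofReal (b j) * ENNReal.ofReal (W.phi j p)
    with hgdef
  have hφm : ∀ j, Measurable (W.phi j) := by
    intro j
    have hlip : LipschitzWith (Real.toNNReal (c / W.radius j)) (W.phi j) := by
      apply LipschitzWith.of_dist_le_mul
      intro p q
      rw [Real.dist_eq, Real.coe_toNNReal _ (le_of_lt (div_pos hc (hr j)))]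
      exact W.phi_lip j p q
    exact hlip.continuous.measurable
  have hgm : ∀ j, Measurable (g j) := fun j =>
    measurable_const.mul (ENNReal.measurable_ofReal.comp (hφm j))
  -- pointwise bound
  have hA : ∀ p ∈ Ω, ENNReal.ofReal |discreteConv μ W u p| ≤ ∑' j, g j p := by
    intro p hp
    obtain ⟨s, hscard, hs⟩ := key p hp
    have hoff : ∀ j ∉ s,
        (⨍ y in ball (W.center j) (W.radius j), u y ∂μ) * W.phi j p = 0 := by
      intro j hj
      have hphi : W.phi j p = 0 := by
        by_contra h
        exact hj (hs j (hball2 j (W.phi_supp j (Function.mem_support.2 h))))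
      simp [hphi]
    have hdc : discreteConv μ W u p
        = ∑ j ∈ s, (⨍ y in ball (W.center j) (W.radius j), u y ∂μ) * W.phi j p :=
      tsum_eq_sum hoff
    calc ENNReal.ofReal |discreteConv μ W u p|
        ≤ ENNReal.ofReal (∑ j ∈ s, b j * W.phi j p) := by
          apply ENNReal.ofReal_le_ofReal
          rw [hdc]
          refine (Finset.abs_sum_le_sum_abs _ _).trans (Finset.sum_le_sum fun j _ => ?_)
          rw [abs_mul, abs_of_nonneg (W.phi_nonneg j p)]
          exact mul_le_mul_of_nonneg_right (hab j) (W.phi_nonneg j p)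
      _ = ∑ j ∈ s, ENNReal.ofReal (b j * W.phi j p) :=
          ENNReal.ofReal_sum_of_nonneg fun j _ => mul_nonneg (hbnn j) (W.phi_nonneg j p)
      _ = ∑ j ∈ s, g j p :=
          Finset.sum_congr rfl fun j _ => ENNReal.ofReal_mul (hbnn j)
      _ ≤ ∑' j, g j p := ENNReal.sum_le_tsum s
  -- per-ball bound
  have hCj : ∀ j, ∫⁻ p in Ω, g j p ∂μ ≤
      ENNReal.ofReal C_d * ∫⁻ p in ball (W.center j) (W.radius j), ENNReal.ofReal |u p| ∂μ := by
    intro j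
    obtain ⟨hpos, hdub, hfin⟩ := hdoub (W.center j) (W.radius j) (hr j)
    have h1 : ∫⁻ p in Ω, g j p ∂μ
        ≤ ENNReal.ofReal (b j) * μ (ball (W.center j) (2 * W.radius j)) := by
      have hptw : ∀ p, g j p ≤ ENNReal.ofReal (b j) *
          (ball (W.center j) (2 * W.radius j)).indicator 1 p := by
        intro p
        by_cases hp : p ∈ ball (W.center j) (2 * W.radius j)
        · rw [Set.indicator_of_mem hp]
          exact mul_le_mul_right (by simpa using ENNReal.ofReal_le_one.2 (W.phi_le_one j p)) _
        · have hphi : W.phi j p = 0 := by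
            by_contra h
            exact hp (W.phi_supp j (Function.mem_support.2 h))
          simp [hgdef, hphi, Set.indicator_of_notMem hp]
      calc ∫⁻ p in Ω, g j p ∂μ ≤ ∫⁻ p, g j p ∂μ :=
            lintegral_mono' Measure.restrict_le_self le_rfl
        _ ≤ ∫⁻ p, ENNReal.ofReal (b j) *
            (ball (W.center j) (2 * W.radius j)).indicator 1 p ∂μ := lintegral_mono hptw
        _ = ENNReal.ofReal (b j) * μ (ball (W.center j) (2 * W.radius j)) := by
            rw [lintegral_const_mul _ (measurable_one.indicator measurableSet_ball),
              lintegral_indicator measurableSet_ball _]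
            simp
    have hint : IntegrableOn (fun y => |u y|) (ball (W.center j) (W.radius j)) μ :=
      (hu.mono_set (hBsub j)).abs
    have h2 : ENNReal.ofReal (b j) = (μ (ball (W.center j) (W.radius j)))⁻¹ *
        ∫⁻ p in ball (W.center j) (W.radius j), ENNReal.ofReal |u p| ∂μ := by
      rw [hbdef]
      simp only [setAverage_eq, smul_eq_mul]
      rw [ENNReal.ofReal_mul (inv_nonneg.2 measureReal_nonneg)]
      congr 1
      · rw [measureReal_def, ← ENNReal.toReal_inv, ENNReal.ofReal_toReal (ENNReal.inv_ne_top.2 hpos.ne')]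
      · exact ofReal_integral_eq_lintegral_ofReal hint (ae_of_all _ fun y => abs_nonneg _)
    refine h1.trans ?_
    rw [h2]
    set I := ∫⁻ p in ball (W.center j) (W.radius j), ENNReal.ofReal |u p| ∂μ
    set m := μ (ball (W.center j) (W.radius j)) with hm
    calc m⁻¹ * I * μ (ball (W.center j) (2 * W.radius j))
        ≤ m⁻¹ * I * (ENNReal.ofReal C_d * m) := mul_le_mul_right hdub _
      _ = ENNReal.ofReal C_d * I * (m⁻¹ * m) := by ring
      _ = ENNReal.ofReal C_d * I := by
          rw [ENNReal.inv_mul_cancel hpos.ne' hfin.ne, mul_one]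
  -- overlapping balls bound
  have hum : AEMeasurable (fun p => ENNReal.ofReal |u p|) (μ.restrict Ω) := by
    simpa [Real.norm_eq_abs, Function.comp_def] using
      ENNReal.measurable_ofReal.comp_aemeasurable hu.aestronglyMeasurable.norm.aemeasurable
  have hE : ∑' j, ∫⁻ p in ball (W.center j) (W.radius j), ENNReal.ofReal |u p| ∂μ
      ≤ (C₀ : ENNReal) * ∫⁻ p in Ω, ENNReal.ofReal |u p| ∂μ := by
    have hrestr : ∀ j, ∫⁻ p in ball (W.center j) (W.radius j), ENNReal.ofReal |u p| ∂μ
        = ∫⁻ p, (ball (W.center j) (W.radius j)).indicator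
            (fun q => ENNReal.ofReal |u q|) p ∂(μ.restrict Ω) := by
      intro j
      rw [lintegral_indicator measurableSet_ball _, Measure.restrict_restrict measurableSet_ball,
        Set.inter_eq_self_of_subset_left (hBsub j)]
    calc ∑' j, ∫⁻ p in ball (W.center j) (W.radius j), ENNReal.ofReal |u p| ∂μ
        = ∑' j, ∫⁻ p, (ball (W.center j) (W.radius j)).indicator
            (fun q => ENNReal.ofReal |u q|) p ∂(μ.restrict Ω) := tsum_congr hrestr
      _ = ∫⁻ p, ∑' j, (ball (W.center j) (W.radius j)).indicator
            (fun q => ENNReal.ofReal |u q|) p ∂(μ.restrict Ω) :=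
          (lintegral_tsum fun j => hum.indicator measurableSet_ball).symm
      _ ≤ ∫⁻ p, (C₀ : ENNReal) * ENNReal.ofReal |u p| ∂(μ.restrict Ω) := by
          apply lintegral_mono_ae
          filter_upwards [ae_restrict_mem hΩm] with p hp
          obtain ⟨s, hscard, hs⟩ := key p hp
          have hoff : ∀ j ∉ s, (ball (W.center j) (W.radius j)).indicator
              (fun q => ENNReal.ofReal |u q|) p = 0 := by
            intro j hj
            exact Set.indicator_of_notMem (fun hmem => hj (hs j (hball1 j hmem))) _
          rw [tsum_eq_sum hoff]
          calc ∑ j ∈ s, (ball (W.center j) (W.radius j)).indicator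
                (fun q => ENNReal.ofReal |u q|) p
              ≤ ∑ j ∈ s, ENNReal.ofReal |u p| :=
                Finset.sum_le_sum fun j _ => Set.indicator_le_self _ _ p
            _ = s.card • ENNReal.ofReal |u p| := Finset.sum_const _
            _ ≤ (C₀ : ENNReal) * ENNReal.ofReal |u p| := by
                rw [nsmul_eq_mul]
                exact mul_le_mul_left (by exact_mod_cast hscard) _
      _ = (C₀ : ENNReal) * ∫⁻ p in Ω, ENNReal.ofReal |u p| ∂μ :=
          lintegral_const_mul' _ _ (by simp)
  -- combine
  calc ∫⁻ p in Ω, ENNReal.ofReal |discreteConv μ W u p| ∂μ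
      ≤ ∫⁻ p in Ω, ∑' j, g j p ∂μ := by
        apply lintegral_mono_ae
        filter_upwards [ae_restrict_mem hΩm] with p hp using hA p hp
    _ = ∑' j, ∫⁻ p in Ω, g j p ∂μ := lintegral_tsum fun j => (hgm j).aemeasurable
    _ ≤ ∑' j, ENNReal.ofReal C_d *
        ∫⁻ p in ball (W.center j) (W.radius j), ENNReal.ofReal |u p| ∂μ :=
        ENNReal.tsum_le_tsum hCj
    _ = ENNReal.ofReal C_d *
        ∑' j, ∫⁻ p in ball (W.center j) (W.radius j), ENNReal.ofReal |u p| ∂μ :=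
        ENNReal.tsum_mul_left
    _ ≤ ENNReal.ofReal C_d * ((C₀ : ENNReal) * ∫⁻ p in Ω, ENNReal.ofReal |u p| ∂μ) :=
        mul_le_mul_right hE _
    _ ≤ ENNReal.ofReal (C_d * C₀ + 1) * ∫⁻ p in Ω, ENNReal.ofReal |u p| ∂μ := by
        rw [← mul_assoc, ← ENNReal.ofReal_natCast C₀,
          ← ENNReal.ofReal_mul (by linarith : (0:ℝ) ≤ C_d)]
        exact mul_le_mul_left (ENNReal.ofReal_le_ofReal (by linarith)) _
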